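/- If π < θ < 2π, then (θ + sin θ)/2 < (θ - sin θ)/(1 - cos θ); if 0 < θ < π, then (θ + sin θ)/2 > (θ - sin θ)/(1 - cos θ); and for θ = π the two quantities are equal. -/

import Mathlib

open Real

lemma g_pos_aux {t : ℝ} (ht0 : 0 < t) (htπ : t < π) :
    0 < Real.sin t + Real.sin t ^ 3 - t * Real.cos t := by
  have key : StrictMonoOn (fun t => Real.sin t + Real.sin t ^ 3 - t * Real.cos t)
      (Set.Icc 0 π) := by
    apply strictMonoOn_of_deriv_pos (convex_Icc 0 π)
    · fun_prop
    · intro x hx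
      rw [interior_Icc] at hx
      have h1 := Real.hasDerivAt_sin x
      have h2 := Real.hasDerivAt_cos x
      have h3 : HasDerivAt (fun t => Real.sin t ^ 3)
          (3 * Real.sin x ^ 2 * Real.cos x) x := by
        have := h1.pow 3
        norm_num at this
        exact this
      have h4 : HasDerivAt (fun t : ℝ => t * Real.cos t)
          (1 * Real.cos x + x * (-Real.sin x)) x := (hasDerivAt_id x).mul h2
      have hd : HasDerivAt (fun t => Real.sin t + Real.sin t ^ 3 - t * Real.cos t)
          (3 * Real.sin x ^ 2 * Real.cos x + x * Real.sin x) x := by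
        exact ((h1.add h3).sub h4).congr_deriv (by ring)
      rw [hd.deriv]
      obtain ⟨hx1, hx2⟩ := hx
      have hs : 0 < Real.sin x := Real.sin_pos_of_pos_of_lt_pi hx1 hx2
      have hb : Real.sin x * Real.cos x ≥ -(1/2) := by
        have := Real.neg_one_le_sin (2*x)
        rw [Real.sin_two_mul] at this
        linarith
      rcases le_or_gt x (π/2) with h | h
      · have hc : 0 ≤ Real.cos x := Real.cos_nonneg_of_mem_Icc
          ⟨by linarith [Real.pi_pos], h⟩
        nlinarith [mul_pos hx1 hs, mul_nonneg (by positivity : (0:ℝ) ≤ 3 * Real.sin x ^ 2) hc]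
      · have hx32 : (3:ℝ)/2 < x := by nlinarith [Real.pi_gt_three]
        nlinarith [sq_nonneg (Real.sin x)]
  have h := key (Set.mem_Icc.mpr ⟨le_refl 0, Real.pi_pos.le⟩)
      (Set.mem_Icc.mpr ⟨ht0.le, htπ.le⟩) ht0
  simpa using h

theorem critical_point_location (θ : ℝ) (h1 : 0 < θ) (h2 : θ < 2*π) :
    (π < θ → (θ + Real.sin θ)/2 < (θ - Real.sin θ)/(1 - Real.cos θ)) ∧
    (θ < π → (θ + Real.sin θ)/2 > (θ - Real.sin θ)/(1 - Real.cos θ)) ∧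
    (θ = π → (θ + Real.sin θ)/2 = (θ - Real.sin θ)/(1 - Real.cos θ)) := by
  set t := θ/2 with htdef
  have hθ : θ = 2*t := by rw [htdef]; ring
  have ht0 : 0 < t := by rw [htdef]; linarith
  have htπ : t < π := by rw [htdef]; linarith
  have hs : 0 < Real.sin t := Real.sin_pos_of_pos_of_lt_pi ht0 htπ
  have hsin : Real.sin θ = 2 * Real.sin t * Real.cos t := by
    rw [hθ, Real.sin_two_mul]
  have pyth := Real.sin_sq_add_cos_sq t
  have hcos : Real.cos θ = 1 - 2 * Real.sin t ^ 2 := by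
    rw [hθ, Real.cos_two_mul]
    linarith
  have hden : 0 < 1 - Real.cos θ := by
    rw [hcos]
    nlinarith
  have hg := g_pos_aux ht0 htπ
  have key : (θ + Real.sin θ) * (1 - Real.cos θ) - (θ - Real.sin θ) * 2
      = 4 * Real.cos t * (Real.sin t + Real.sin t ^ 3 - t * Real.cos t) := by
    rw [hsin, hcos, hθ]
    linear_combination (4*t) * pyth
  refine ⟨fun hπ => ?_, fun hπ => ?_, fun hπ => ?_⟩
  · have hc : Real.cos t < 0 := by
      apply Real.cos_neg_of_pi_div_two_lt_of_lt
      · rw [htdef]; linarith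
      · rw [htdef]; linarith [Real.pi_pos]
    rw [div_lt_div_iff₀ two_pos hden]
    nlinarith [mul_pos (neg_pos.mpr hc) hg]
  · have hc : 0 < Real.cos t := by
      apply Real.cos_pos_of_mem_Ioo
      constructor
      · rw [htdef]; linarith [Real.pi_pos]
      · rw [htdef]; linarith
    rw [gt_iff_lt, div_lt_div_iff₀ hden two_pos]
    nlinarith [mul_pos hc hg]
  · subst hπ
    simp
    norm_num
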